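/- arXiv:1310.1208 — 4 statements merged into one kernel-verified Lean document; each statement's English description precedes it below -/
import Mathlib

section
/- Let Ω ⊂ ℝⁿ be a bounded open set, ψ: closure(Ω) → ℝⁿ Lipschitz, and let T > 0 be such that φ_t = id + tψ is bi-Lipschitz from closure(Ω) onto its image for all t ∈ (−T, T). Fix t₀ ∈ (−T, T). Then there exist constants c, s₀ > 0 such that for all x ∈ Ω and all s ∈ (−s₀, s₀): c⁻¹ · d_{φ_{t₀}(Ω)}(φ_{t₀}(x)) ≤ d_{φ_{t₀+s}(Ω)}(φ_{t₀+s}(x)) ≤ c · d_{φ_{t₀}(Ω)}(φ_{t₀}(x)). -/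
open Metric Set
open scoped NNReal ENNReal

private abbrev EE (n : ℕ) := EuclideanSpace ℝ (Fin n)

private theorem infDist_image_le' {X : Type*} [MetricSpace X] {H : X → X} {L : ℝ} (hL : 0 < L)
    (hH : ∀ u v, dist (H u) (H v) ≤ L * dist u v) (p : X) (S : Set X) :
    Metric.infDist (H p) (H '' S) ≤ L * Metric.infDist p S := by
  rcases S.eq_empty_or_nonempty with rfl | hS
  · simp [Metric.infDist_empty]
  · refine le_of_forall_pos_le_add fun ε hε => ?_
    have h1 : Metric.infDist p S < Metric.infDist p S + ε / L :=
      lt_add_of_pos_right _ (div_pos hε hL)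
    obtain ⟨w, hwS, hw⟩ := (Metric.infDist_lt_iff hS).1 h1
    calc Metric.infDist (H p) (H '' S) ≤ dist (H p) (H w) :=
          Metric.infDist_le_dist_of_mem ⟨w, hwS, rfl⟩
      _ ≤ L * dist p w := hH p w
      _ ≤ L * (Metric.infDist p S + ε / L) := mul_le_mul_of_nonneg_left hw.le hL.le
      _ = L * Metric.infDist p S + ε := by field_simp

set_option maxHeartbeats 1000000 in
/-- cf. (3.9): With `φ_t = id + t ψ` bi-Lipschitz on `closure Ω` for `|t| < T`
and `t₀` fixed, there are `c, s₀ > 0` such that for all `x ∈ Ω` and `|s| < s₀`: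
`c⁻¹ d_{φ_{t₀}(Ω)}(φ_{t₀}(x)) ≤ d_{φ_{t₀+s}(Ω)}(φ_{t₀+s}(x)) ≤ c d_{φ_{t₀}(Ω)}(φ_{t₀}(x))`. -/
theorem stmt12 {n : ℕ} (Ω : Set (EuclideanSpace ℝ (Fin n)))
    (hΩo : IsOpen Ω) (hΩb : Bornology.IsBounded Ω)
    (ψ : EuclideanSpace ℝ (Fin n) → EuclideanSpace ℝ (Fin n)) (K : NNReal)
    (hψ : LipschitzOnWith K ψ (closure Ω)) (T : ℝ) (hT : 0 < T)
    (hbil : ∀ t : ℝ, |t| < T →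
      ∃ (K₂ : NNReal) (g : EuclideanSpace ℝ (Fin n) → EuclideanSpace ℝ (Fin n)),
        LipschitzOnWith K₂ g ((fun x => x + t • ψ x) '' closure Ω) ∧
        Set.LeftInvOn g (fun x => x + t • ψ x) (closure Ω))
    (t₀ : ℝ) (ht₀ : |t₀| < T) :
    ∃ c > (0 : ℝ), ∃ s₀ > (0 : ℝ), ∀ x ∈ Ω, ∀ s : ℝ, |s| < s₀ →
      c⁻¹ * Metric.infDist (x + t₀ • ψ x) (frontier ((fun z => z + t₀ • ψ z) '' Ω)) ≤
          Metric.infDist (x + (t₀ + s) • ψ x) (frontier ((fun z => z + (t₀ + s) • ψ z) '' Ω)) ∧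
        Metric.infDist (x + (t₀ + s) • ψ x) (frontier ((fun z => z + (t₀ + s) • ψ z) '' Ω)) ≤
          c * Metric.infDist (x + t₀ • ψ x) (frontier ((fun z => z + t₀ • ψ z) '' Ω)) := by
  classical
  obtain ⟨K₂, g, hg, hgi⟩ := hbil t₀ ht₀
  set F : Set (EE n) := (fun x => x + t₀ • ψ x) '' closure Ω with hF
  -- `ψ ∘ g` is Lipschitz on `F`
  have hmaps : Set.MapsTo g F (closure Ω) := by
    rintro w ⟨z, hz, rfl⟩
    have := hgi hz
    simp only at this
    rw [this]
    exact hz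
  have hcomp : LipschitzOnWith (K * K₂) (ψ ∘ g) F := hψ.comp hg hmaps
  -- extend to a globally Lipschitz map `Θ`
  have h2 : LipschitzOnWith (1 * (K * K₂)) ((WithLp.equiv 2 (Fin n → ℝ)) ∘ (ψ ∘ g)) F :=
    (PiLp.lipschitzWith_ofLp 2 _).comp_lipschitzOnWith hcomp
  obtain ⟨G, hG, hGeq⟩ := h2.extend_pi
  have hsymm : LipschitzWith ((Fintype.card (Fin n) : ℝ≥0) ^ ((1 : ℝ≥0∞)/2).toReal)
      ⇑(WithLp.equiv 2 (Fin n → ℝ)).symm :=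
    (PiLp.antilipschitzWith_ofLp 2 _).to_rightInverse (WithLp.equiv 2 (Fin n → ℝ)).apply_symm_apply
  set Θ : EE n → EE n := fun w => (WithLp.equiv 2 (Fin n → ℝ)).symm (G w) with hΘdef
  set C : ℝ≥0 := (Fintype.card (Fin n) : ℝ≥0) ^ ((1 : ℝ≥0∞)/2).toReal * (1 * (K * K₂)) with hCdef
  have hΘ : LipschitzWith C Θ := hsymm.comp hG
  have hΘeq : ∀ w ∈ F, Θ w = ψ (g w) := by
    intro w hw
    have := hGeq hw
    simp only [Function.comp_apply] at this
    rw [hΘdef]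
    simp only [← this, Equiv.symm_apply_apply]
  have hΘdist : ∀ u v : EE n, ‖Θ u - Θ v‖ ≤ (C : ℝ) * ‖u - v‖ := by
    intro u v
    have := hΘ.dist_le_mul u v
    rwa [dist_eq_norm, dist_eq_norm] at this
  have hCpos : (0 : ℝ) < 2 * (C : ℝ) + 1 := by positivity
  refine ⟨2, by norm_num, (2 * (C : ℝ) + 1)⁻¹, inv_pos.2 hCpos, ?_⟩
  intro x hx s hs
  -- the key smallness bound
  have hsC : |s| * (C : ℝ) ≤ 1 / 2 := by
    have h5 : |s| * (2 * (C : ℝ) + 1) < 1 := by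
      have := (lt_div_iff₀ hCpos).1 (by rwa [one_div] : |s| < 1 / (2 * (C : ℝ) + 1))
      linarith [this]
    nlinarith [abs_nonneg s, C.coe_nonneg]
  set H : EE n → EE n := fun w => w + s • Θ w with hHdef
  have hHsub : ∀ u v : EE n, H u - H v = (u - v) + s • (Θ u - Θ v) := by
    intro u v
    simp only [hHdef, smul_sub]
    abel
  have hsmall : ∀ u v : EE n, ‖s • (Θ u - Θ v)‖ ≤ 1 / 2 * ‖u - v‖ := by
    intro u v
    rw [norm_smul, Real.norm_eq_abs]
    calc |s| * ‖Θ u - Θ v‖ ≤ |s| * ((C : ℝ) * ‖u - v‖) :=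
          mul_le_mul_of_nonneg_left (hΘdist u v) (abs_nonneg s)
      _ = |s| * (C : ℝ) * ‖u - v‖ := by ring
      _ ≤ 1 / 2 * ‖u - v‖ := mul_le_mul_of_nonneg_right hsC (norm_nonneg _)
  have hHlip : ∀ u v : EE n, dist (H u) (H v) ≤ (3 / 2 : ℝ) * dist u v := by
    intro u v
    rw [dist_eq_norm, dist_eq_norm, hHsub]
    calc ‖(u - v) + s • (Θ u - Θ v)‖ ≤ ‖u - v‖ + ‖s • (Θ u - Θ v)‖ := norm_add_le _ _
      _ ≤ ‖u - v‖ + 1 / 2 * ‖u - v‖ := by linarith [hsmall u v]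
      _ = 3 / 2 * ‖u - v‖ := by ring
  have hHanti : ∀ u v : EE n, dist u v ≤ 2 * dist (H u) (H v) := by
    intro u v
    rw [dist_eq_norm, dist_eq_norm, hHsub]
    have h6 : ‖u - v‖ ≤ ‖(u - v) + s • (Θ u - Θ v)‖ + 1 / 2 * ‖u - v‖ := by
      calc ‖u - v‖ = ‖((u - v) + s • (Θ u - Θ v)) - s • (Θ u - Θ v)‖ := by abel_nf
        _ ≤ ‖(u - v) + s • (Θ u - Θ v)‖ + ‖s • (Θ u - Θ v)‖ := norm_sub_le _ _
        _ ≤ ‖(u - v) + s • (Θ u - Θ v)‖ + 1 / 2 * ‖u - v‖ := by linarith [hsmall u v]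
    linarith
  have hHinj : Function.Injective H := by
    intro u v huv
    have := hHanti u v
    rw [huv, dist_self, mul_zero] at this
    exact dist_le_zero.1 this
  have hHsurj : Function.Surjective H := by
    intro y
    have hT2 : ContractingWith (1 / 2 : ℝ≥0) (fun u : EE n => y - s • Θ u) := by
      constructor
      · rw [← NNReal.coe_lt_one]; norm_num
      · refine LipschitzWith.of_dist_le_mul fun u v => ?_
        rw [dist_eq_norm]
        have : (y - s • Θ u) - (y - s • Θ v) = -(s • (Θ u - Θ v)) := by
          rw [smul_sub]; abel
        rw [this, norm_neg, dist_eq_norm]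
        calc ‖s • (Θ u - Θ v)‖ ≤ 1 / 2 * ‖u - v‖ := hsmall u v
          _ = ((1 / 2 : ℝ≥0) : ℝ) * ‖u - v‖ := by norm_num
    refine ⟨hT2.fixedPoint _, ?_⟩
    have hfix := hT2.fixedPoint_isFixedPt
    have : y - s • Θ (hT2.fixedPoint _) = hT2.fixedPoint _ := hfix
    show hT2.fixedPoint _ + s • Θ (hT2.fixedPoint _) = y
    exact (sub_eq_iff_eq_add.mp this).symm
  set He : EE n ≃ₜ EE n :=
    { toEquiv := Equiv.ofBijective H ⟨hHinj, hHsurj⟩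
      continuous_toFun :=
        (LipschitzWith.of_dist_le_mul (K := (3/2 : ℝ≥0)) (by
          intro u v
          have := hHlip u v
          norm_num at this ⊢
          exact this)).continuous
      continuous_invFun := by
        refine (LipschitzWith.of_dist_le_mul (K := (2 : ℝ≥0)) ?_).continuous
        intro a b
        have h7 := hHanti ((Equiv.ofBijective H ⟨hHinj, hHsurj⟩).symm a)
          ((Equiv.ofBijective H ⟨hHinj, hHsurj⟩).symm b)
        have ha : H ((Equiv.ofBijective H ⟨hHinj, hHsurj⟩).symm a) = a :=
          (Equiv.ofBijective H ⟨hHinj, hHsurj⟩).apply_symm_apply a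
        have hb : H ((Equiv.ofBijective H ⟨hHinj, hHsurj⟩).symm b) = b :=
          (Equiv.ofBijective H ⟨hHinj, hHsurj⟩).apply_symm_apply b
        rw [ha, hb] at h7
        push_cast
        exact h7 } with hHedef
  have hHecoe : ⇑He = H := rfl
  -- `H` maps `φ_{t₀}` points to `φ_{t₀+s}` points
  have hHφ : ∀ z ∈ closure Ω, H (z + t₀ • ψ z) = z + (t₀ + s) • ψ z := by
    intro z hz
    have hmem : z + t₀ • ψ z ∈ F := Set.mem_image_of_mem _ hz
    have hgz : g (z + t₀ • ψ z) = z := hgi hz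
    simp only [hHdef]
    rw [hΘeq _ hmem, hgz, add_smul]
    abel
  set A : Set (EE n) := (fun z => z + t₀ • ψ z) '' Ω with hA
  have himg : (fun z => z + (t₀ + s) • ψ z) '' Ω = H '' A := by
    rw [hA, Set.image_image]
    exact Set.image_congr fun z hz => (hHφ z (subset_closure hz)).symm
  have hfront : frontier ((fun z => z + (t₀ + s) • ψ z) '' Ω) = H '' frontier A := by
    rw [himg, ← hHecoe, He.image_frontier]
  have hpoint : x + (t₀ + s) • ψ x = H (x + t₀ • ψ x) := (hHφ x (subset_closure hx)).symm
  set p : EE n := x + t₀ • ψ x with hp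
  have hupper : Metric.infDist (x + (t₀ + s) • ψ x)
      (frontier ((fun z => z + (t₀ + s) • ψ z) '' Ω)) ≤
      2 * Metric.infDist p (frontier A) := by
    rw [hpoint, hfront]
    have := infDist_image_le' (by norm_num : (0:ℝ) < 3/2) hHlip p (frontier A)
    have hnn := Metric.infDist_nonneg (x := p) (s := frontier A)
    linarith
  have hlower : Metric.infDist p (frontier A) ≤
      2 * Metric.infDist (x + (t₀ + s) • ψ x)
        (frontier ((fun z => z + (t₀ + s) • ψ z) '' Ω)) := by
    rw [hpoint, hfront]
    have hinv : ∀ a b : EE n, dist (He.symm a) (He.symm b) ≤ 2 * dist a b := by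
      intro a b
      have h7 := hHanti (He.symm a) (He.symm b)
      have ha : H (He.symm a) = a := He.apply_symm_apply a
      have hb : H (He.symm b) = b := He.apply_symm_apply b
      rwa [ha, hb] at h7
    have h8 := infDist_image_le' (by norm_num : (0:ℝ) < 2) hinv (H p) (H '' frontier A)
    have h9 : He.symm (H p) = p := He.symm_apply_apply p
    have h10 : ⇑He.symm '' (H '' frontier A) = frontier A := by
      rw [← hHecoe]
      exact He.toEquiv.symm_image_image (frontier A)
    rwa [h9, h10] at h8
  refine ⟨by linarith [hlower], hupper⟩
end

section
/- Let Ω ⊂ ℝⁿ be a bounded open set, ψ: closure(Ω) → ℝⁿ Lipschitz, p ∈ [1, ∞), and φ_t = id + tψ bi-Lipschitz for |t| < T. Fix t₀ with |t₀| < T. Then there exist c, s₀ > 0 such that for all x ∈ Ω and s ∈ (−s₀, s₀): |d_{φ_{t₀+s}(Ω)}(φ_{t₀+s}(x))^p − d_{φ_{t₀}(Ω)}(φ_{t₀}(x))^p| ≤ c · d_{φ_{t₀}(Ω)}(φ_{t₀}(x))^p · |s|. -/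
open Metric Set

/-- A segment from a point of `A` to a point outside `A` crosses the frontier. -/
lemma seg_cross_frontier {E : Type*} [NormedAddCommGroup E] [NormedSpace ℝ E]
    {A : Set E} {a b : E} (ha : a ∈ A) (hb : b ∉ A) :
    ∃ c ∈ frontier A, dist a c ≤ dist a b := by
  have hseg : IsPreconnected (segment ℝ a b) := (convex_segment a b).isPreconnected
  have hne : (segment ℝ a b ∩ frontier A).Nonempty := by
    by_contra h
    rw [Set.not_nonempty_iff_eq_empty] at h
    have hsub : segment ℝ a b ⊆ interior A ∪ interior Aᶜ := by
      intro z hz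
      have hzf : z ∉ frontier A := fun hf =>
        Set.eq_empty_iff_forall_notMem.1 h z ⟨hz, hf⟩
      rw [frontier_eq_closure_inter_closure, Set.mem_inter_iff, not_and_or] at hzf
      rcases hzf with hz1 | hz2
      · right
        rw [interior_compl]
        exact hz1
      · left
        have : z ∈ (closure Aᶜ)ᶜ := hz2
        rwa [closure_compl, compl_compl] at this
    have hdisj : Disjoint (interior A) (interior Aᶜ) := by
      refine Set.disjoint_left.2 fun z hz1 hz2 => ?_
      exact (interior_subset hz2) (interior_subset hz1)
    have hamem : a ∈ interior A := by
      rcases hsub (left_mem_segment ℝ a b) with h1 | h1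
      · exact h1
      · exact absurd (interior_subset h1) (by simpa using ha)
    have hall : segment ℝ a b ⊆ interior A :=
      hseg.subset_left_of_subset_union isOpen_interior isOpen_interior hdisj hsub
        ⟨a, left_mem_segment ℝ a b, hamem⟩
    exact hb (interior_subset (hall (right_mem_segment ℝ a b)))
  obtain ⟨c, hcseg, hcf⟩ := hne
  refine ⟨c, hcf, ?_⟩
  obtain ⟨u, v, hu, hv, huv, rfl⟩ := hcseg
  have : a - (u • a + v • b) = v • (a - b) := by
    have hu1 : u = 1 - v := by linarith
    rw [hu1]; module
  rw [dist_eq_norm, this, norm_smul, Real.norm_eq_abs, abs_of_nonneg hv, dist_eq_norm]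
  nlinarith [norm_nonneg (a - b)]

/-- For a point of `A`, distance to the frontier equals distance to the complement. -/
lemma infDist_frontier_eq_compl {E : Type*} [NormedAddCommGroup E] [NormedSpace ℝ E]
    {A : Set E} {a : E} (ha : a ∈ A) :
    infDist a (frontier A) = infDist a Aᶜ := by
  rcases Set.eq_empty_or_nonempty Aᶜ with hAc | hAc
  · have hA : A = univ := by
      rw [← compl_compl A, hAc, Set.compl_empty]
    rw [hA, frontier_univ, Set.compl_univ, infDist_empty]
  · refine le_antisymm ?_ ?_
    · -- infDist a (frontier A) ≤ infDist a Aᶜ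
      refine le_of_not_gt fun hlt => ?_
      obtain ⟨w, hw, hwd⟩ := (infDist_lt_iff hAc).1 hlt
      obtain ⟨c, hcf, hcd⟩ := seg_cross_frontier ha hw
      have h2 : infDist a (frontier A) ≤ dist a c := infDist_le_dist_of_mem (x := a) hcf
      linarith
    · -- other direction
      have hfne : (frontier A).Nonempty := by
        rw [nonempty_frontier_iff]
        refine ⟨⟨a, ha⟩, fun h => ?_⟩
        rcases hAc with ⟨w, hw⟩
        exact hw (h ▸ Set.mem_univ w)
      have hsub : frontier A ⊆ closure Aᶜ := by
        rw [frontier_eq_closure_inter_closure]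
        exact Set.inter_subset_right
      calc infDist a Aᶜ = infDist a (closure Aᶜ) := (infDist_closure).symm
        _ ≤ infDist a (frontier A) := infDist_le_infDist_of_subset hsub hfne

/-- Key quantitative ball lemma: points close to the perturbed image point are in the
perturbed image. -/
lemma key_ball {E : Type*} [NormedAddCommGroup E] [NormedSpace ℝ E] [CompleteSpace E]
    (Ω : Set E) (ψ : E → E) (Kr L : ℝ) (hKr : 0 ≤ Kr) (hL : 0 ≤ L)
    (hK : ∀ z ∈ closure Ω, ∀ z' ∈ closure Ω, dist (ψ z) (ψ z') ≤ Kr * dist z z')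
    (t u : ℝ) (g : E → E)
    (hgli : Set.LeftInvOn g (fun z => z + t • ψ z) (closure Ω))
    (hgL : ∀ v ∈ (fun z => z + t • ψ z) '' closure Ω,
        ∀ w ∈ (fun z => z + t • ψ z) '' closure Ω, dist (g v) (g w) ≤ L * dist v w)
    (hcon : |u - t| * Kr * L ≤ 1 / 2)
    (x : E) (hx : x ∈ Ω) (y : E)
    (hy : dist y (x + u • ψ x) <
      infDist (x + t • ψ x) (((fun z => z + t • ψ z) '' Ω)ᶜ) / (1 + 2 * L * Kr * |u - t|)) :
    y ∈ (fun z => z + u • ψ z) '' Ω := by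
  set d : ℝ := infDist (x + t • ψ x) (((fun z => z + t • ψ z) '' Ω)ᶜ) with hd_def
  have hd0 : 0 ≤ d := infDist_nonneg
  have habs : (0:ℝ) ≤ |u - t| := abs_nonneg _
  have hD0 : (0:ℝ) < 1 + 2 * L * Kr * |u - t| := by positivity
  set ρ : ℝ := d / (1 + 2 * L * Kr * |u - t|) with hρ_def
  have hρ0 : 0 ≤ ρ := by positivity
  have hρd : ρ * (1 + 2 * L * Kr * |u - t|) = d := div_mul_cancel₀ d (ne_of_gt hD0)
  set r : ℝ := 2 * L * ρ with hr_def
  have hr0 : 0 ≤ r := by positivity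
  set S : Set E := closure Ω ∩ Metric.closedBall x r with hS_def
  have hxS : x ∈ S := ⟨subset_closure hx, mem_closedBall_self hr0⟩
  have hSc : IsClosed S := isClosed_closure.inter Metric.isClosed_closedBall
  -- distance estimate
  have hdist : ∀ z ∈ S, dist (y - (u - t) • ψ z) (x + t • ψ x) < d := by
    intro z hz
    have hzx : dist x z ≤ r := by
      have := hz.2
      rw [mem_closedBall] at this
      rw [dist_comm]; exact this
    have he : y - (u - t) • ψ z - (x + t • ψ x) =
        (y - (x + u • ψ x)) + (u - t) • (ψ x - ψ z) := by module
    have h1 : dist (y - (u - t) • ψ z) (x + t • ψ x) ≤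
        dist y (x + u • ψ x) + |u - t| * dist (ψ x) (ψ z) := by
      rw [dist_eq_norm, he]
      refine (norm_add_le _ _).trans ?_
      rw [norm_smul, Real.norm_eq_abs]
      rw [dist_eq_norm, dist_eq_norm]
    have h2 : dist (ψ x) (ψ z) ≤ Kr * dist x z :=
      hK x (subset_closure hx) z hz.1
    have h3 : dist (ψ x) (ψ z) ≤ Kr * r :=
      h2.trans (by nlinarith)
    have h4 : dist y (x + u • ψ x) < ρ := hy
    calc dist (y - (u - t) • ψ z) (x + t • ψ x)
        ≤ dist y (x + u • ψ x) + |u - t| * dist (ψ x) (ψ z) := h1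
      _ < ρ + |u - t| * (Kr * r) := by nlinarith
      _ = ρ * (1 + 2 * L * Kr * |u - t|) := by rw [hr_def]; ring
      _ = d := hρd
  have hmem : ∀ z ∈ S, (y - (u - t) • ψ z) ∈ (fun z => z + t • ψ z) '' Ω := by
    intro z hz
    by_contra hmem'
    have h1 : d ≤ dist (x + t • ψ x) (y - (u - t) • ψ z) :=
      infDist_le_dist_of_mem (Set.mem_compl hmem')
    rw [dist_comm] at h1
    exact absurd (hdist z hz) (not_lt.2 h1)
  -- the iteration map
  set Φ : E → E := fun z => g (y - (u - t) • ψ z) with hΦ_def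
  have hximg : (x + t • ψ x) ∈ (fun z => z + t • ψ z) '' closure Ω :=
    ⟨x, subset_closure hx, rfl⟩
  have hΦval : ∀ z ∈ S, ∃ w ∈ Ω, Φ z = w ∧ w + t • ψ w = y - (u - t) • ψ z := by
    intro z hz
    obtain ⟨w, hwΩ, hweq⟩ := hmem z hz
    refine ⟨w, hwΩ, ?_, hweq⟩
    have : Φ z = g (w + t • ψ w) := by rw [hΦ_def]; simp only []; rw [← hweq]
    rw [this]
    exact hgli (subset_closure hwΩ)
  have hΦS : Set.MapsTo Φ S S := by
    intro z hz
    obtain ⟨w, hwΩ, hΦw, hweq⟩ := hΦval z hz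
    have hgx : g (x + t • ψ x) = x := hgli (subset_closure hx)
    have himg : (y - (u - t) • ψ z) ∈ (fun z => z + t • ψ z) '' closure Ω :=
      (Set.image_mono subset_closure) (hmem z hz)
    have hdd : dist (Φ z) x ≤ L * d := by
      have := hgL _ himg _ hximg
      rw [hgx] at this
      refine this.trans ?_
      have := (hdist z hz).le
      nlinarith
    have hLd : L * d ≤ r := by
      have : d ≤ 2 * ρ := by nlinarith
      rw [hr_def]; nlinarith
    refine ⟨hΦw ▸ subset_closure hwΩ, ?_⟩
    rw [mem_closedBall]
    exact hdd.trans hLd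
  have hcontr : ∀ z ∈ S, ∀ z' ∈ S, dist (Φ z) (Φ z') ≤ (1 / 2) * dist z z' := by
    intro z hz z' hz'
    have himg : (y - (u - t) • ψ z) ∈ (fun z => z + t • ψ z) '' closure Ω :=
      (Set.image_mono subset_closure) (hmem z hz)
    have himg' : (y - (u - t) • ψ z') ∈ (fun z => z + t • ψ z) '' closure Ω :=
      (Set.image_mono subset_closure) (hmem z' hz')
    have h1 := hgL _ himg _ himg'
    have he : (y - (u - t) • ψ z) - (y - (u - t) • ψ z') = (u - t) • (ψ z' - ψ z) := by
      module
    have h2 : dist (y - (u - t) • ψ z) (y - (u - t) • ψ z') = |u - t| * dist (ψ z') (ψ z) := by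
      rw [dist_eq_norm, he, norm_smul, Real.norm_eq_abs, dist_eq_norm]
    have h3 : dist (ψ z') (ψ z) ≤ Kr * dist z' z := hK z' hz'.1 z hz.1
    have h4 : dist z' z = dist z z' := dist_comm _ _
    refine h1.trans ?_
    rw [h2]
    have hdn : (0:ℝ) ≤ dist z z' := dist_nonneg
    have habs' : (0:ℝ) ≤ |u - t| := abs_nonneg _
    have h5 : dist (ψ z') (ψ z) ≤ Kr * dist z z' := by rw [← h4]; exact h3
    nlinarith [mul_le_mul_of_nonneg_left h5 (mul_nonneg hL habs'),
      mul_le_mul_of_nonneg_right hcon hdn]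
  -- Banach fixed point on S
  have hfix : ∃ z ∈ S, Φ z = z := by
    have hKlt : (⟨1/2, by norm_num⟩ : NNReal) < 1 := by
      change (1/2 : ℝ) < 1; norm_num
    have hlip : LipschitzWith (⟨1/2, by norm_num⟩ : NNReal) (hΦS.restrict Φ S S) := by
      apply LipschitzWith.of_dist_le_mul
      intro a b
      have := hcontr a a.2 b b.2
      exact this
    have hcw : ContractingWith (⟨1/2, by norm_num⟩ : NNReal) (hΦS.restrict Φ S S) :=
      ⟨hKlt, hlip⟩
    obtain ⟨z, hzS, hzfix, -, -⟩ :=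
      hcw.exists_fixedPoint' hSc.isComplete hΦS hxS (edist_ne_top _ _)
    exact ⟨z, hzS, hzfix⟩
  obtain ⟨z, hzS, hzfix⟩ := hfix
  obtain ⟨w, hwΩ, hΦw, hweq⟩ := hΦval z hzS
  have hzw : z = w := by rw [← hzfix, hΦw]
  subst hzw
  refine ⟨z, hwΩ, ?_⟩
  show z + u • ψ z = y
  have h2 : z + u • ψ z = (z + t • ψ z) + (u - t) • ψ z := by module
  rw [h2, hweq]
  abel

/-- `(1+u)^m ≤ 1 + 3^m u` for `u ∈ [0,1]`. -/
lemma one_add_pow_le {u : ℝ} (hu0 : 0 ≤ u) (hu1 : u ≤ 1) (m : ℕ) :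
    (1 + u) ^ m ≤ 1 + 3 ^ m * u := by
  induction m with
  | zero => simp only [pow_zero, one_mul]; linarith
  | succ k ih =>
      have h3 : (0:ℝ) < 3 ^ k := by positivity
      have hpow : (0:ℝ) ≤ (1 + u) ^ k := by positivity
      calc (1 + u) ^ (k + 1) = (1 + u) ^ k * (1 + u) := by ring
        _ ≤ (1 + 3 ^ k * u) * (1 + u) := by nlinarith
        _ = 1 + (3 ^ k + 1 + 3 ^ k * u) * u := by ring
        _ ≤ 1 + 3 ^ (k + 1) * u := by
            rw [pow_succ]
            have h31 : (1:ℝ) ≤ 3 ^ k := one_le_pow₀ (by norm_num)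
            have hkey : 3 ^ k + 1 + 3 ^ k * u ≤ 3 ^ k * 3 := by
              nlinarith [mul_le_mul_of_nonneg_left hu1 h3.le]
            nlinarith [mul_le_mul_of_nonneg_right hkey hu0]

/-- `1 - m u ≤ (1-u)^m` for `u ∈ [0,1]`. -/
lemma one_sub_mul_le_pow {u : ℝ} (hu0 : 0 ≤ u) (hu1 : u ≤ 1) (m : ℕ) :
    1 - (m : ℝ) * u ≤ (1 - u) ^ m := by
  induction m with
  | zero => simp only [pow_zero, Nat.cast_zero, zero_mul, sub_zero, le_refl]
  | succ k ih =>
      have hpow : (0:ℝ) ≤ (1 - u) ^ k := pow_nonneg (by linarith) k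
      have hple : (1 - u) ^ k ≤ 1 := pow_le_one₀ (by linarith) (by linarith)
      have hcast : ((k + 1 : ℕ) : ℝ) = (k : ℝ) + 1 := by push_cast; ring
      rw [hcast, pow_succ]
      nlinarith

set_option maxHeartbeats 1600000 in
/-- Lemma 3.1(i): With `φ_t = id + t ψ` bi-Lipschitz on `closure Ω` for
`|t| < T`, `p ∈ [1,∞)` and `t₀` fixed, there are `c, s₀ > 0` such that for all `x ∈ Ω` and
`|s| < s₀`:
`|d_{φ_{t₀+s}(Ω)}(φ_{t₀+s}(x))^p − d_{φ_{t₀}(Ω)}(φ_{t₀}(x))^p| ≤ c d_{φ_{t₀}(Ω)}(φ_{t₀}(x))^p |s|`. -/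
theorem stmt13 {n : ℕ} (Ω : Set (EuclideanSpace ℝ (Fin n)))
    (hΩo : IsOpen Ω) (hΩb : Bornology.IsBounded Ω)
    (ψ : EuclideanSpace ℝ (Fin n) → EuclideanSpace ℝ (Fin n)) (K : NNReal)
    (hψ : LipschitzOnWith K ψ (closure Ω)) (p : ℝ) (hp : 1 ≤ p) (T : ℝ) (hT : 0 < T)
    (hbil : ∀ t : ℝ, |t| < T →
      ∃ (K₂ : NNReal) (g : EuclideanSpace ℝ (Fin n) → EuclideanSpace ℝ (Fin n)),
        LipschitzOnWith K₂ g ((fun x => x + t • ψ x) '' closure Ω) ∧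
        Set.LeftInvOn g (fun x => x + t • ψ x) (closure Ω))
    (t₀ : ℝ) (ht₀ : |t₀| < T) :
    ∃ c > (0 : ℝ), ∃ s₀ > (0 : ℝ), ∀ x ∈ Ω, ∀ s : ℝ, |s| < s₀ →
      |Metric.infDist (x + (t₀ + s) • ψ x) (frontier ((fun z => z + (t₀ + s) • ψ z) '' Ω)) ^ p -
          Metric.infDist (x + t₀ • ψ x) (frontier ((fun z => z + t₀ • ψ z) '' Ω)) ^ p|
        ≤ c * Metric.infDist (x + t₀ • ψ x) (frontier ((fun z => z + t₀ • ψ z) '' Ω)) ^ p * |s| := by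
  have hp0 : (0:ℝ) < p := lt_of_lt_of_le one_pos hp
  rcases subsingleton_or_nontrivial (EuclideanSpace ℝ (Fin n)) with hsub | hnt
  · -- subsingleton case: everything is zero
    refine ⟨1, one_pos, 1, one_pos, fun x hx s hs => ?_⟩
    have himg : ∀ t : ℝ, ((fun z => z + t • ψ z) '' Ω) = univ := by
      intro t
      apply Set.eq_univ_of_forall
      intro w
      have : (fun z => z + t • ψ z) x ∈ (fun z => z + t • ψ z) '' Ω :=
        Set.mem_image_of_mem _ hx
      rwa [Subsingleton.elim w ((fun z => z + t • ψ z) x)]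
    rw [himg, himg, frontier_univ]
    simp [Real.zero_rpow (ne_of_gt hp0)]
  · -- main case
    obtain ⟨K₂, g, hgL₂, hgli⟩ := hbil t₀ ht₀
    obtain ⟨Kr, hKr_def⟩ : ∃ Kr : ℝ, Kr = (K : ℝ) + 1 := ⟨_, rfl⟩
    obtain ⟨Lr, hLr_def⟩ : ∃ Lr : ℝ, Lr = (K₂ : ℝ) + 1 := ⟨_, rfl⟩
    have hKr1 : 1 ≤ Kr := by rw [hKr_def]; linarith [K.coe_nonneg]
    have hLr1 : 1 ≤ Lr := by rw [hLr_def]; linarith [K₂.coe_nonneg]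
    have hKr0 : 0 ≤ Kr := by linarith
    have hLr0 : 0 ≤ Lr := by linarith
    have hK : ∀ z ∈ closure Ω, ∀ z' ∈ closure Ω, dist (ψ z) (ψ z') ≤ Kr * dist z z' := by
      intro z hz z' hz'
      refine (hψ.dist_le_mul z hz z' hz').trans ?_
      have h1 : (K:ℝ) ≤ Kr := by rw [hKr_def]; linarith
      nlinarith [dist_nonneg (x := z) (y := z')]
    have hg : ∀ v ∈ (fun z => z + t₀ • ψ z) '' closure Ω,
        ∀ w ∈ (fun z => z + t₀ • ψ z) '' closure Ω, dist (g v) (g w) ≤ Lr * dist v w := by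
      intro v hv w hw
      refine (hgL₂.dist_le_mul v hv w hw).trans ?_
      have h1 : (K₂:ℝ) ≤ Lr := by rw [hLr_def]; linarith
      nlinarith [dist_nonneg (x := v) (y := w)]
    have hinv : ∀ z ∈ closure Ω, ∀ z' ∈ closure Ω,
        dist z z' ≤ Lr * dist (z + t₀ • ψ z) (z' + t₀ • ψ z') := by
      intro z hz z' hz'
      have h1 := hg _ (Set.mem_image_of_mem _ hz) _ (Set.mem_image_of_mem _ hz')
      rwa [hgli hz, hgli hz'] at h1
    obtain ⟨m, hm_def⟩ : ∃ m : ℕ, m = ⌈p⌉₊ := ⟨_, rfl⟩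
    have hpm : p ≤ (m : ℝ) := by rw [hm_def]; exact Nat.le_ceil p
    obtain ⟨γ, hγ_def⟩ : ∃ γ : ℝ, γ = 4 * Lr * Kr := ⟨_, rfl⟩
    have hγ4 : 4 ≤ γ := by rw [hγ_def]; nlinarith
    have hγ0 : 0 < γ := by linarith
    refine ⟨((3:ℝ) ^ m + m) * γ, by positivity, min (T - |t₀|) (1 / γ),
      lt_min (by linarith) (by positivity), ?_⟩
    intro x hx s hs
    have hsγ : |s| < 1 / γ := lt_of_lt_of_le hs (min_le_right _ _)
    have hsT : |s| < T - |t₀| := lt_of_lt_of_le hs (min_le_left _ _)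
    have hs0 : 0 ≤ |s| := abs_nonneg s
    have hsγ1 : 4 * Lr * Kr * |s| < 1 := by
      rw [lt_div_iff₀ hγ0] at hsγ
      rw [← hγ_def]
      linarith
    have hcon1 : |s| * Kr * Lr ≤ 1 / 2 := by nlinarith
    -- complement nonempty
    have hcompl : ∀ t : ℝ, (((fun z => z + t • ψ z) '' Ω)ᶜ).Nonempty := by
      intro t
      obtain ⟨R, hR⟩ := hΩb.subset_closedBall 0
      have hxR : ‖x‖ ≤ R := by
        have := hR hx
        rwa [mem_closedBall, dist_zero_right] at this
      have hR0 : 0 ≤ R := le_trans (norm_nonneg x) hxR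
      obtain ⟨C, hC_def⟩ : ∃ C : ℝ, C = R + |t| * (‖ψ x‖ + Kr * (2 * R)) := ⟨_, rfl⟩
      have hC0 : 0 ≤ C := by rw [hC_def]; positivity
      have hbound : ∀ z ∈ Ω, ‖z + t • ψ z‖ ≤ C := by
        intro z hz
        have hzR : ‖z‖ ≤ R := by
          have := hR hz
          rwa [mem_closedBall, dist_zero_right] at this
        have h1 : ‖ψ z‖ ≤ ‖ψ x‖ + Kr * (2 * R) := by
          have h2 : dist (ψ z) (ψ x) ≤ Kr * dist z x :=
            hK z (subset_closure hz) x (subset_closure hx)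
          have h3 : dist z x ≤ 2 * R := by
            calc dist z x ≤ ‖z‖ + ‖x‖ := by
                  rw [dist_eq_norm]; exact (norm_sub_le _ _)
              _ ≤ 2 * R := by linarith
          have h4 : ‖ψ z‖ ≤ ‖ψ x‖ + dist (ψ z) (ψ x) := by
            rw [dist_eq_norm]
            linarith [abs_le.1 (abs_norm_sub_norm_le (ψ z) (ψ x))]
          nlinarith
        calc ‖z + t • ψ z‖ ≤ ‖z‖ + ‖t • ψ z‖ := norm_add_le _ _
          _ = ‖z‖ + |t| * ‖ψ z‖ := by rw [norm_smul, Real.norm_eq_abs]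
          _ ≤ C := by rw [hC_def]; nlinarith [abs_nonneg t]
      obtain ⟨v, hv⟩ := exists_ne (0 : EuclideanSpace ℝ (Fin n))
      have hv0 : 0 < ‖v‖ := norm_pos_iff.2 hv
      refine ⟨((C + 1) / ‖v‖) • v, ?_⟩
      intro hmem
      obtain ⟨z, hzΩ, hzeq⟩ := hmem
      have h1 : ‖((C + 1) / ‖v‖) • v‖ = C + 1 := by
        rw [norm_smul, Real.norm_eq_abs, abs_of_pos (by positivity)]
        field_simp
      have h2 : ‖z + t • ψ z‖ ≤ C := hbound z hzΩ
      have hzeq' : z + t • ψ z = ((C + 1) / ‖v‖) • v := hzeq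
      rw [hzeq', h1] at h2
      linarith
    -- distances to complements
    have hfr : ∀ t : ℝ,
        infDist (x + t • ψ x) (frontier ((fun z => z + t • ψ z) '' Ω)) =
        infDist (x + t • ψ x) (((fun z => z + t • ψ z) '' Ω)ᶜ) := by
      intro t
      exact infDist_frontier_eq_compl ⟨x, hx, rfl⟩
    rw [hfr (t₀ + s), hfr t₀]
    set d0 : ℝ := infDist (x + t₀ • ψ x) (((fun z => z + t₀ • ψ z) '' Ω)ᶜ) with hd0_def
    set ds : ℝ := infDist (x + (t₀ + s) • ψ x) (((fun z => z + (t₀ + s) • ψ z) '' Ω)ᶜ)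
      with hds_def
    have hd00 : 0 ≤ d0 := infDist_nonneg
    have hds0 : 0 ≤ ds := infDist_nonneg
    have habs_s : |t₀ + s - t₀| = |s| := by rw [add_sub_cancel_left]
    -- lower bound for ds
    have hlow : d0 / (1 + 2 * Lr * Kr * |s|) ≤ ds := by
      refine le_of_not_gt fun hlt => ?_
      obtain ⟨w, hw, hwd⟩ := (infDist_lt_iff (hcompl (t₀ + s))).1 hlt
      refine hw (key_ball Ω ψ Kr Lr hKr0 hLr0 hK t₀ (t₀ + s) g hgli hg
        (by rw [habs_s]; exact hcon1) x hx w ?_)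
      rw [habs_s, dist_comm]
      exact hwd
    -- lower bound for d0 (via inverse at t₀+s)
    have hts : |t₀ + s| < T := by
      calc |t₀ + s| ≤ |t₀| + |s| := abs_add_le _ _
        _ < T := by linarith
    obtain ⟨K₂s, gs, hgsL, hgsli⟩ := hbil (t₀ + s) hts
    have hgs2L : ∀ v ∈ (fun z => z + (t₀ + s) • ψ z) '' closure Ω,
        ∀ w ∈ (fun z => z + (t₀ + s) • ψ z) '' closure Ω,
        dist (gs v) (gs w) ≤ (2 * Lr) * dist v w := by
      rintro v ⟨z, hz, rfl⟩ w ⟨z', hz', rfl⟩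
      simp only []
      rw [hgsli hz, hgsli hz']
      have h1 : dist z z' ≤ Lr * dist (z + t₀ • ψ z) (z' + t₀ • ψ z') := hinv z hz z' hz'
      have h2 : dist (z + t₀ • ψ z) (z' + t₀ • ψ z') ≤
          dist (z + (t₀ + s) • ψ z) (z' + (t₀ + s) • ψ z') + |s| * dist (ψ z) (ψ z') := by
        have he : (z + t₀ • ψ z) - (z' + t₀ • ψ z') =
            ((z + (t₀ + s) • ψ z) - (z' + (t₀ + s) • ψ z')) + (-s) • (ψ z - ψ z') := by
          module
        rw [dist_eq_norm, he]
        refine (norm_add_le _ _).trans ?_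
        rw [norm_smul, Real.norm_eq_abs, abs_neg, dist_eq_norm, dist_eq_norm]
      have h3 : dist (ψ z) (ψ z') ≤ Kr * dist z z' := hK z hz z' hz'
      have hdn : (0:ℝ) ≤ dist z z' := dist_nonneg
      have hdn2 : (0:ℝ) ≤ dist (z + (t₀ + s) • ψ z) (z' + (t₀ + s) • ψ z') := dist_nonneg
      nlinarith [mul_le_mul_of_nonneg_left h3 (mul_nonneg hs0 hLr0),
        mul_le_mul_of_nonneg_right hsγ1.le hdn]
    have hlow2 : ds / (1 + 2 * (2 * Lr) * Kr * |s|) ≤ d0 := by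
      refine le_of_not_gt fun hlt => ?_
      obtain ⟨w, hw, hwd⟩ := (infDist_lt_iff (hcompl t₀)).1 hlt
      have habs_s' : |t₀ - (t₀ + s)| = |s| := by
        rw [sub_add_eq_sub_sub, sub_self, zero_sub, abs_neg]
      refine hw (key_ball Ω ψ Kr (2 * Lr) hKr0 (by linarith) hK (t₀ + s) t₀ gs hgsli hgs2L
        (by rw [habs_s']; nlinarith) x hx w ?_)
      rw [habs_s', dist_comm]
      exact hwd
    -- linear bounds
    obtain ⟨u, hu_def⟩ : ∃ u : ℝ, u = γ * |s| := ⟨_, rfl⟩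
    have hu0 : 0 ≤ u := by rw [hu_def]; positivity
    have hu1 : u < 1 := by rw [hu_def, hγ_def]; linarith
    have hA : ds ≤ (1 + u) * d0 := by
      rw [div_le_iff₀ (by positivity)] at hlow2
      calc ds ≤ d0 * (1 + 2 * (2 * Lr) * Kr * |s|) := hlow2
        _ = (1 + u) * d0 := by rw [hu_def, hγ_def]; ring
    have hB : (1 - u) * d0 ≤ ds := by
      refine le_trans ?_ hlow
      rw [le_div_iff₀ (by positivity)]
      have hu_eq : u = 4 * Lr * Kr * |s| := by rw [hu_def, hγ_def]
      rw [hu_eq]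
      nlinarith [mul_nonneg (mul_nonneg (mul_nonneg hLr0 hKr0) hs0)
        (mul_nonneg (mul_nonneg (mul_nonneg hLr0 hKr0) hs0) hd00),
        mul_le_mul_of_nonneg_right hsγ1.le (mul_nonneg (mul_nonneg (mul_nonneg hLr0 hKr0) hs0) hd00)]
    -- rpow bounds
    have hrw_up : ds ^ p ≤ (1 + 3 ^ m * u) * d0 ^ p := by
      calc ds ^ p ≤ ((1 + u) * d0) ^ p :=
            Real.rpow_le_rpow hds0 hA (le_of_lt hp0)
        _ = (1 + u) ^ p * d0 ^ p := Real.mul_rpow (by linarith) hd00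
        _ ≤ (1 + u) ^ (m : ℝ) * d0 ^ p := by
            have h1 : (1 + u) ^ p ≤ (1 + u) ^ (m : ℝ) :=
              Real.rpow_le_rpow_of_exponent_le (by linarith) hpm
            have h2 : (0:ℝ) ≤ d0 ^ p := Real.rpow_nonneg hd00 p
            nlinarith
        _ = (1 + u) ^ m * d0 ^ p := by rw [Real.rpow_natCast]
        _ ≤ (1 + 3 ^ m * u) * d0 ^ p := by
            have h1 := one_add_pow_le hu0 (le_of_lt hu1) m
            have h2 : (0:ℝ) ≤ d0 ^ p := Real.rpow_nonneg hd00 p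
            nlinarith
    have hrw_dn : (1 - (m : ℝ) * u) * d0 ^ p ≤ ds ^ p := by
      have h1u : 0 < 1 - u := by linarith
      calc (1 - (m : ℝ) * u) * d0 ^ p ≤ (1 - u) ^ m * d0 ^ p := by
            have h1 := one_sub_mul_le_pow hu0 (le_of_lt hu1) m
            have h2 : (0:ℝ) ≤ d0 ^ p := Real.rpow_nonneg hd00 p
            nlinarith
        _ = (1 - u) ^ (m : ℝ) * d0 ^ p := by rw [Real.rpow_natCast]
        _ ≤ (1 - u) ^ p * d0 ^ p := by
            have h1 : (1 - u) ^ (m : ℝ) ≤ (1 - u) ^ p :=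
              Real.rpow_le_rpow_of_exponent_ge h1u (by linarith) hpm
            have h2 : (0:ℝ) ≤ d0 ^ p := Real.rpow_nonneg hd00 p
            nlinarith
        _ = ((1 - u) * d0) ^ p := (Real.mul_rpow (by linarith) hd00).symm
        _ ≤ ds ^ p := Real.rpow_le_rpow (by positivity) hB (le_of_lt hp0)
    -- conclude
    rw [abs_sub_le_iff]
    have h3m : (0:ℝ) < 3 ^ m := by positivity
    have hdp : (0:ℝ) ≤ d0 ^ p := Real.rpow_nonneg hd00 p
    have hm0 : (0:ℝ) ≤ (m : ℝ) := Nat.cast_nonneg m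
    have hγs : u * d0 ^ p = γ * d0 ^ p * |s| := by rw [hu_def]; ring
    have hup : 0 ≤ u * d0 ^ p := mul_nonneg hu0 hdp
    constructor
    · have h1 : ds ^ p - d0 ^ p ≤ 3 ^ m * (u * d0 ^ p) := by nlinarith
      rw [hγs] at h1
      nlinarith [mul_nonneg (mul_nonneg (mul_nonneg hm0 hγ0.le) hdp) hs0]
    · have h1 : d0 ^ p - ds ^ p ≤ (m : ℝ) * (u * d0 ^ p) := by nlinarith
      rw [hγs] at h1
      nlinarith [mul_nonneg (mul_nonneg (mul_nonneg h3m.le hγ0.le) hdp) hs0]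
end

section
/- Let Ω ⊂ ℝⁿ be a bounded open set, ψ: closure(Ω) → ℝⁿ Lipschitz, and φ_t = id + tψ bi-Lipschitz for |t| < T. Suppose x ∈ Ω is such that the distance function d_{φ_{t₀}(Ω)} is differentiable at φ_{t₀}(x) (equivalently, there is a unique nearest boundary point τ(φ_{t₀}(x))). Then, writing b_s ∈ ∂Ω for a nearest-point selection with d_{φ_{t₀+s}(Ω)}(φ_{t₀+s}(x)) = |φ_{t₀+s}(x) − φ_{t₀+s}(b_s)|, one has lim_{s→0} φ_{t₀+s}(b_s) = τ_{φ_{t₀}(Ω)}(φ_{t₀}(x)); in particular lim_{s→0} b_s = φ_{t₀}^{-1}(τ_{φ_{t₀}(Ω)}(φ_{t₀}(x))). -/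
open Metric Set Filter Topology

lemma dist_shift_aux {E : Type*} [NormedAddCommGroup E] [NormedSpace ℝ E]
    (a c u v : E) (t t' : ℝ) :
    dist (a + t • u) (c + t • v) ≤ dist (a + t' • u) (c + t' • v) + |t - t'| * (‖u‖ + ‖v‖) := by
  have h1 : a + t • u = (a + t' • u) + (t - t') • u := by rw [sub_smul]; abel
  have h2 : c + t • v = (c + t' • v) + (t - t') • v := by rw [sub_smul]; abel
  rw [h1, h2]
  refine (dist_add_add_le _ _ _ _).trans ?_
  have h3 : dist ((t - t') • u) ((t - t') • v) ≤ |t - t'| * (‖u‖ + ‖v‖) := by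
    rw [dist_smul₀, Real.norm_eq_abs]
    exact mul_le_mul_of_nonneg_left (dist_le_norm_add_norm _ _) (abs_nonneg _)
  linarith

/-- With `φ_t = id + t ψ` bi-Lipschitz, if the distance function of
`φ_{t₀}(Ω)` has a unique nearest boundary point `τ` at `y = φ_{t₀}(x)` (equivalently it is
differentiable there), and `b_s ∈ ∂Ω` is any nearest-point selection for the perturbed
domains, then `φ_{t₀+s}(b_s) → τ` and `b_s → φ_{t₀}⁻¹(τ)` as `s → 0`. -/
theorem stmt14 {n : ℕ} (Ω : Set (EuclideanSpace ℝ (Fin n)))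
    (hΩo : IsOpen Ω) (hΩb : Bornology.IsBounded Ω)
    (ψ : EuclideanSpace ℝ (Fin n) → EuclideanSpace ℝ (Fin n)) (K : NNReal)
    (hψ : LipschitzOnWith K ψ (closure Ω)) (T : ℝ) (hT : 0 < T)
    (hbil : ∀ t : ℝ, |t| < T →
      ∃ (K₂ : NNReal) (g : EuclideanSpace ℝ (Fin n) → EuclideanSpace ℝ (Fin n)),
        LipschitzOnWith K₂ g ((fun x => x + t • ψ x) '' closure Ω) ∧
        Set.LeftInvOn g (fun x => x + t • ψ x) (closure Ω))
    (t₀ : ℝ) (ht₀ : |t₀| < T)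
    (hfr : (fun z => z + t₀ • ψ z) '' frontier Ω = frontier ((fun z => z + t₀ • ψ z) '' Ω))
    (g₀ : EuclideanSpace ℝ (Fin n) → EuclideanSpace ℝ (Fin n)) (K₀ : NNReal)
    (hg₀ : LipschitzOnWith K₀ g₀ ((fun z => z + t₀ • ψ z) '' closure Ω))
    (hg₀i : Set.LeftInvOn g₀ (fun z => z + t₀ • ψ z) (closure Ω))
    (x : EuclideanSpace ℝ (Fin n)) (hx : x ∈ Ω)
    (τ : EuclideanSpace ℝ (Fin n))
    (hτmem : τ ∈ frontier ((fun z => z + t₀ • ψ z) '' Ω))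
    (hτdist : dist (x + t₀ • ψ x) τ =
      Metric.infDist (x + t₀ • ψ x) (frontier ((fun z => z + t₀ • ψ z) '' Ω)))
    (hτuniq : ∀ b' ∈ frontier ((fun z => z + t₀ • ψ z) '' Ω),
      dist (x + t₀ • ψ x) b' =
        Metric.infDist (x + t₀ • ψ x) (frontier ((fun z => z + t₀ • ψ z) '' Ω)) → b' = τ)
    (b : ℝ → EuclideanSpace ℝ (Fin n)) (s₁ : ℝ) (hs₁ : 0 < s₁) (hs₁T : s₁ ≤ T - |t₀|)
    (hb : ∀ s : ℝ, |s| < s₁ → b s ∈ frontier Ω ∧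
      Metric.infDist (x + (t₀ + s) • ψ x) (frontier ((fun z => z + (t₀ + s) • ψ z) '' Ω)) =
        dist (x + (t₀ + s) • ψ x) (b s + (t₀ + s) • ψ (b s))) :
    Tendsto (fun s : ℝ => b s + (t₀ + s) • ψ (b s)) (𝓝[≠] (0 : ℝ)) (𝓝 τ) ∧
      Tendsto b (𝓝[≠] (0 : ℝ)) (𝓝 (g₀ τ)) := by
  have hclΩ : IsCompact (closure Ω) := hΩb.isCompact_closure
  have hfrc : IsCompact (frontier Ω) :=
    hclΩ.of_isClosed_subset isClosed_frontier frontier_subset_closure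
  obtain ⟨M0, hM0⟩ := hclΩ.exists_bound_of_continuousOn hψ.continuousOn
  set M := max M0 0 with hM
  have hMnn : (0:ℝ) ≤ M := le_max_right _ _
  have hMb : ∀ z ∈ closure Ω, ‖ψ z‖ ≤ M := fun z hz => (hM0 z hz).trans (le_max_left _ _)
  have hxcl : x ∈ closure Ω := subset_closure hx
  have hcont : ∀ t : ℝ, ContinuousOn (fun w => w + t • ψ w) (closure Ω) :=
    fun t => continuousOn_id.add (hψ.continuousOn.const_smul t)
  -- key frontier inclusion
  have hfront : ∀ t : ℝ, |t| < T → ∀ z ∈ frontier Ω,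
      (z + t • ψ z) ∈ frontier ((fun w => w + t • ψ w) '' Ω) := by
    intro t ht z hz
    obtain ⟨K₂, g, hg, hgi⟩ := hbil t ht
    have hzc : z ∈ closure Ω := frontier_subset_closure hz
    rw [frontier, Set.mem_diff]
    constructor
    · exact (hcont t).image_closure (mem_image_of_mem _ hzc)
    · intro hint
      obtain ⟨w, hwΩ, hweq⟩ := interior_subset hint
      have hwz : w = z := by
        have h1 := hgi (subset_closure hwΩ)
        have h2 := hgi hzc
        simp only at h1 h2 hweq
        rw [← h1, hweq, h2]
      have hzΩ : z ∈ Ω := hwz ▸ hwΩ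
      have := hΩo.frontier_eq ▸ hz
      exact this.2 hzΩ
  -- the point over τ
  obtain ⟨bh, hbhfr, hbheq⟩ : ∃ bh ∈ frontier Ω, bh + t₀ • ψ bh = τ := by
    have h := hfr ▸ hτmem
    obtain ⟨bh, h1, h2⟩ := h
    exact ⟨bh, h1, h2⟩
  have hbhcl : bh ∈ closure Ω := frontier_subset_closure hbhfr
  -- main estimate
  have hmain : ∀ s : ℝ, |s| < s₁ →
      dist (x + t₀ • ψ x) (b s + t₀ • ψ (b s)) ≤ dist (x + t₀ • ψ x) τ + |s| * (4 * M) := by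
    intro s hs
    obtain ⟨hbfr, hbd⟩ := hb s hs
    have hbcl : b s ∈ closure Ω := frontier_subset_closure hbfr
    have htT : |t₀ + s| < T := (abs_add_le t₀ s).trans_lt (by linarith)
    have h1 := dist_shift_aux x (b s) (ψ x) (ψ (b s)) t₀ (t₀ + s)
    have he1 : t₀ - (t₀ + s) = -s := by ring
    rw [he1, abs_neg] at h1
    have h2 : ‖ψ x‖ + ‖ψ (b s)‖ ≤ 2 * M := by
      have := hMb x hxcl; have := hMb (b s) hbcl; linarith
    have h2' : |s| * (‖ψ x‖ + ‖ψ (b s)‖) ≤ |s| * (2 * M) :=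
      mul_le_mul_of_nonneg_left h2 (abs_nonneg s)
    have h3 : Metric.infDist (x + (t₀ + s) • ψ x)
        (frontier ((fun z => z + (t₀ + s) • ψ z) '' Ω)) ≤
        dist (x + (t₀ + s) • ψ x) (bh + (t₀ + s) • ψ bh) :=
      Metric.infDist_le_dist_of_mem (hfront (t₀ + s) htT bh hbhfr)
    have h4 := dist_shift_aux x bh (ψ x) (ψ bh) (t₀ + s) t₀
    rw [add_sub_cancel_left] at h4
    have h5 : ‖ψ x‖ + ‖ψ bh‖ ≤ 2 * M := by
      have := hMb x hxcl; have := hMb bh hbhcl; linarith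
    have h5' : |s| * (‖ψ x‖ + ‖ψ bh‖) ≤ |s| * (2 * M) :=
      mul_le_mul_of_nonneg_left h5 (abs_nonneg s)
    rw [hbheq] at h4
    linarith
  -- compactness of the perturbed frontier
  have hFc : IsCompact (frontier ((fun z => z + t₀ • ψ z) '' Ω)) := by
    rw [← hfr]
    exact hfrc.image_of_continuousOn ((hcont t₀).mono frontier_subset_closure)
  -- uniqueness gives a gap
  have hconv : ∀ ε : ℝ, 0 < ε → ∃ m, dist (x + t₀ • ψ x) τ < m ∧
      ∀ w ∈ frontier ((fun z => z + t₀ • ψ z) '' Ω),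
        dist (x + t₀ • ψ x) w < m → dist w τ < ε := by
    intro ε hε
    set Kc := frontier ((fun z => z + t₀ • ψ z) '' Ω) ∩ {w | ε ≤ dist w τ} with hKc
    have hKcc : IsCompact Kc :=
      hFc.inter_right (isClosed_le continuous_const (continuous_id.dist continuous_const))
    rcases Kc.eq_empty_or_nonempty with hemp | hne
    · refine ⟨dist (x + t₀ • ψ x) τ + 1, by linarith, fun w hw _ => ?_⟩
      by_contra hcon
      have hmem : w ∈ Kc := ⟨hw, not_lt.1 hcon⟩
      rw [hemp] at hmem
      exact hmem
    · obtain ⟨w₀, hw₀K, hw₀min⟩ := hKcc.exists_isMinOn hne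
        ((continuous_const.dist continuous_id).continuousOn)
      refine ⟨dist (x + t₀ • ψ x) w₀, ?_, fun w hw hlt => ?_⟩
      · have hle : dist (x + t₀ • ψ x) τ ≤ dist (x + t₀ • ψ x) w₀ := by
          rw [hτdist]; exact Metric.infDist_le_dist_of_mem hw₀K.1
        rcases hle.lt_or_eq with h | h
        · exact h
        · exfalso
          have heq : w₀ = τ := hτuniq w₀ hw₀K.1 (by rw [← h, hτdist])
          have h2 : ε ≤ dist w₀ τ := hw₀K.2
          rw [heq, dist_self] at h2
          linarith
      · by_contra hcon
        have hwK : w ∈ Kc := ⟨hw, not_lt.1 hcon⟩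
        have := (isMinOn_iff.1 hw₀min) w hwK
        exact absurd hlt (not_lt.2 this)
  -- main convergence P
  have P : Tendsto (fun s : ℝ => b s + t₀ • ψ (b s)) (𝓝[≠] (0 : ℝ)) (𝓝 τ) := by
    rw [Metric.tendsto_nhdsWithin_nhds]
    intro ε hε
    obtain ⟨m, hm, hmi⟩ := hconv ε hε
    refine ⟨min s₁ ((m - dist (x + t₀ • ψ x) τ) / (4 * M + 1)),
      lt_min hs₁ (div_pos (by linarith) (by linarith)), ?_⟩
    intro s _ hdist
    rw [Real.dist_eq, sub_zero] at hdist
    have hss₁ : |s| < s₁ := lt_of_lt_of_le hdist (min_le_left _ _)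
    have hle := hmain s hss₁
    have hmem : b s + t₀ • ψ (b s) ∈ frontier ((fun z => z + t₀ • ψ z) '' Ω) :=
      hfront t₀ ht₀ (b s) (hb s hss₁).1
    have h5 : |s| < (m - dist (x + t₀ • ψ x) τ) / (4 * M + 1) :=
      lt_of_lt_of_le hdist (min_le_right _ _)
    have h6 : |s| * (4 * M + 1) < m - dist (x + t₀ • ψ x) τ :=
      (lt_div_iff₀ (by linarith)).1 h5
    have h7 : |s| * (4 * M) ≤ |s| * (4 * M + 1) := by nlinarith [abs_nonneg s]
    exact hmi _ hmem (by linarith)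
  -- eventual smallness
  have hev1 : ∀ᶠ s in 𝓝 (0 : ℝ), |s| < s₁ := by
    filter_upwards [Metric.ball_mem_nhds (0 : ℝ) hs₁] with s hs
    simpa [Real.dist_eq] using hs
  have hev1' : ∀ᶠ s in 𝓝[≠] (0 : ℝ), |s| < s₁ := hev1.filter_mono nhdsWithin_le_nhds
  have Q : Tendsto (fun s : ℝ => s • ψ (b s)) (𝓝[≠] (0 : ℝ)) (𝓝 0) := by
    refine squeeze_zero_norm' (a := fun s : ℝ => |s| * M) ?_ ?_
    · filter_upwards [hev1'] with s hs
      rw [norm_smul, Real.norm_eq_abs]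
      exact mul_le_mul_of_nonneg_left (hMb _ (frontier_subset_closure (hb s hs).1)) (abs_nonneg s)
    · have h := Continuous.tendsto (f := fun s : ℝ => |s| * M) (continuous_abs.mul (continuous_const (y := M))) (0 : ℝ)
      simpa only [abs_zero, zero_mul] using h.mono_left (nhdsWithin_le_nhds (s := {(0:ℝ)}ᶜ))
  have goal1 : Tendsto (fun s : ℝ => b s + (t₀ + s) • ψ (b s)) (𝓝[≠] (0 : ℝ)) (𝓝 τ) := by
    have h := P.add Q
    rw [add_zero] at h
    refine h.congr fun s => ?_
    rw [add_smul]; abel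
  refine ⟨goal1, ?_⟩
  have hτS : τ ∈ (fun z => z + t₀ • ψ z) '' closure Ω := ⟨bh, hbhcl, hbheq⟩
  have hg₀c : ContinuousWithinAt g₀ ((fun z => z + t₀ • ψ z) '' closure Ω) τ :=
    hg₀.continuousOn τ hτS
  have hPin : Tendsto (fun s : ℝ => b s + t₀ • ψ (b s)) (𝓝[≠] (0 : ℝ))
      (𝓝[(fun z => z + t₀ • ψ z) '' closure Ω] τ) := by
    apply tendsto_nhdsWithin_of_tendsto_nhds_of_eventually_within _ P
    filter_upwards [hev1'] with s hs
    exact ⟨b s, frontier_subset_closure (hb s hs).1, rfl⟩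
  have hcomp : Tendsto (fun s : ℝ => g₀ (b s + t₀ • ψ (b s))) (𝓝[≠] (0 : ℝ)) (𝓝 (g₀ τ)) :=
    hg₀c.tendsto.comp hPin
  refine Tendsto.congr' ?_ hcomp
  filter_upwards [hev1'] with s hs
  exact hg₀i (frontier_subset_closure (hb s hs).1)
end

section
/- Let Ω ⊂ ℝⁿ be a bounded open set, ψ: closure(Ω) → ℝⁿ Lipschitz, p ∈ [1, ∞), φ_t = id + tψ bi-Lipschitz for |t| < T. If x ∈ Ω and d_{φ_{t₀}(Ω)} is differentiable at φ_{t₀}(x), then t ↦ d_{φ_t(Ω)}(φ_t(x))^p is differentiable at t₀ with derivative p · d_{φ_{t₀}(Ω)}(φ_{t₀}(x))^p · V(φ_{t₀}(x)), where V(y) = d_{φ_{t₀}(Ω)}(y)^{-1} · ∇d_{φ_{t₀}(Ω)}(y) · (ψ(φ_{t₀}^{-1}(y)) − ψ(φ_{t₀}^{-1}(τ(y)))) and τ(y) is the nearest boundary point of ∂(φ_{t₀}(Ω)) to y. -/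
open Metric Set Filter Topology RealInnerProductSpace

/-- A small Lipschitz perturbation of the identity is a homeomorphism of a complete
normed space, hence commutes with `frontier` of images. -/
theorem perturb_frontier_image {E : Type*} [NormedAddCommGroup E] [NormedSpace ℝ E]
    [CompleteSpace E] (θ : E → E) (C : NNReal) (hθ : LipschitzWith C θ)
    (s : ℝ) (hs : |s| * C < 1) (S : Set E) :
    (fun z => z + s • θ z) '' frontier S = frontier ((fun z => z + s • θ z) '' S) := by
  set f : E → E := fun z => z + s • θ z with hf
  have hsC : (0:ℝ) ≤ |s| * C := mul_nonneg (abs_nonneg _) C.2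
  have hpos : (0:ℝ) < 1 - |s| * C := by linarith
  -- lower Lipschitz bound
  have hlb : ∀ a b : E, (1 - |s| * C) * dist a b ≤ dist (f a) (f b) := by
    intro a b
    have h1 : dist (s • θ a) (s • θ b) ≤ |s| * C * dist a b := by
      rw [dist_smul₀]
      have := hθ.dist_le_mul a b
      calc ‖s‖ * dist (θ a) (θ b) ≤ ‖s‖ * (C * dist a b) := by
            apply mul_le_mul_of_nonneg_left this (norm_nonneg _)
        _ = |s| * C * dist a b := by rw [Real.norm_eq_abs]; ring
    have h2 : dist a b ≤ dist (f a) (f b) + dist (s • θ a) (s • θ b) := by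
      calc dist a b = dist (a + s • θ a) (b + s • θ a) := by rw [dist_add_right]
        _ ≤ dist (a + s • θ a) (b + s • θ b) + dist (b + s • θ b) (b + s • θ a) := dist_triangle _ _ _
        _ = dist (f a) (f b) + dist (s • θ a) (s • θ b) := by
            rw [dist_add_left, dist_comm (s • θ b)]
    nlinarith [dist_nonneg (x := a) (y := b)]
  have hinj : Function.Injective f := by
    intro a b hab
    have := hlb a b
    rw [hab, dist_self] at this
    have : dist a b ≤ 0 := by nlinarith [dist_nonneg (x := a) (y := b)]
    exact dist_le_zero.1 this
  have hsurj : Function.Surjective f := by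
    intro z
    have hg : LipschitzWith (‖s‖₊ * C) (fun w => z - s • θ w) := by
      apply LipschitzWith.of_dist_le_mul
      intro a b
      rw [dist_sub_left, dist_smul₀]
      push_cast
      calc ‖s‖ * dist (θ a) (θ b) ≤ ‖s‖ * (C * dist a b) :=
            mul_le_mul_of_nonneg_left (hθ.dist_le_mul a b) (norm_nonneg _)
        _ = ‖s‖ * C * dist a b := by ring
    have hc : ContractingWith (‖s‖₊ * C) (fun w => z - s • θ w) := by
      constructor
      · rw [← NNReal.coe_lt_one]
        push_cast
        simpa [Real.norm_eq_abs] using hs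
      · exact hg
    obtain ⟨u, hu, -⟩ := hc.exists_fixedPoint z (edist_ne_top _ _)
    exact ⟨u, (sub_eq_iff_eq_add.mp hu).symm⟩
  have hcont : Continuous f := continuous_id.add ((hθ.continuous).const_smul s)
  let e : E ≃ E := Equiv.ofBijective f ⟨hinj, hsurj⟩
  have hconti : Continuous e.symm := by
    have : LipschitzWith (Real.toNNReal ((1 - |s| * C)⁻¹)) e.symm := by
      apply LipschitzWith.of_dist_le_mul
      intro a b
      rw [Real.coe_toNNReal _ (le_of_lt (inv_pos.2 hpos))]
      have h1 := hlb (e.symm a) (e.symm b)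
      have h2 : f (e.symm a) = a := e.apply_symm_apply a
      have h3 : f (e.symm b) = b := e.apply_symm_apply b
      rw [h2, h3] at h1
      rw [inv_mul_eq_div, le_div_iff₀ hpos]
      linarith
    exact this.continuous
  have hhomeo : (⟨e, hcont, hconti⟩ : E ≃ₜ E) '' frontier S =
      frontier ((⟨e, hcont, hconti⟩ : E ≃ₜ E) '' S) :=
    Homeomorph.image_frontier _ S
  exact hhomeo

set_option maxHeartbeats 2000000 in
/-- Lemma 3.1(ii): With `φ_t = id + t ψ` bi-Lipschitz, if the distance
function of `φ_{t₀}(Ω)` has a unique nearest boundary point `τ` at `y = φ_{t₀}(x)`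
(equivalently it is differentiable there, with `∇d(y) = (y - τ)/d(y)`), then
`t ↦ d_{φ_t(Ω)}(φ_t(x))^p` is differentiable at `t₀` with derivative
`p d(y)^p V(y)`, where `V(y) = d(y)⁻¹ ⟪∇d(y), ψ(φ_{t₀}⁻¹(y)) − ψ(φ_{t₀}⁻¹(τ))⟫`. -/
theorem stmt15 {n : ℕ} (Ω : Set (EuclideanSpace ℝ (Fin n)))
    (hΩo : IsOpen Ω) (hΩb : Bornology.IsBounded Ω)
    (ψ : EuclideanSpace ℝ (Fin n) → EuclideanSpace ℝ (Fin n)) (K : NNReal)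
    (hψ : LipschitzOnWith K ψ (closure Ω)) (p : ℝ) (hp : 1 ≤ p) (T : ℝ) (hT : 0 < T)
    (hbil : ∀ t : ℝ, |t| < T →
      ∃ (K₂ : NNReal) (g : EuclideanSpace ℝ (Fin n) → EuclideanSpace ℝ (Fin n)),
        LipschitzOnWith K₂ g ((fun x => x + t • ψ x) '' closure Ω) ∧
        Set.LeftInvOn g (fun x => x + t • ψ x) (closure Ω))
    (t₀ : ℝ) (ht₀ : |t₀| < T)
    (hfr : (fun z => z + t₀ • ψ z) '' frontier Ω = frontier ((fun z => z + t₀ • ψ z) '' Ω))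
    (g₀ : EuclideanSpace ℝ (Fin n) → EuclideanSpace ℝ (Fin n)) (K₀ : NNReal)
    (hg₀ : LipschitzOnWith K₀ g₀ ((fun z => z + t₀ • ψ z) '' closure Ω))
    (hg₀i : Set.LeftInvOn g₀ (fun z => z + t₀ • ψ z) (closure Ω))
    (x : EuclideanSpace ℝ (Fin n)) (hx : x ∈ Ω)
    (τ : EuclideanSpace ℝ (Fin n))
    (hτmem : τ ∈ frontier ((fun z => z + t₀ • ψ z) '' Ω))
    (hτdist : dist (x + t₀ • ψ x) τ =
      Metric.infDist (x + t₀ • ψ x) (frontier ((fun z => z + t₀ • ψ z) '' Ω)))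
    (hτuniq : ∀ b' ∈ frontier ((fun z => z + t₀ • ψ z) '' Ω),
      dist (x + t₀ • ψ x) b' =
        Metric.infDist (x + t₀ • ψ x) (frontier ((fun z => z + t₀ • ψ z) '' Ω)) → b' = τ) :
    HasDerivAt
      (fun t : ℝ =>
        Metric.infDist (x + t • ψ x) (frontier ((fun z => z + t • ψ z) '' Ω)) ^ p)
      (p * Metric.infDist (x + t₀ • ψ x) (frontier ((fun z => z + t₀ • ψ z) '' Ω)) ^ p *
        ((Metric.infDist (x + t₀ • ψ x) (frontier ((fun z => z + t₀ • ψ z) '' Ω)))⁻¹ *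
          ⟪(Metric.infDist (x + t₀ • ψ x) (frontier ((fun z => z + t₀ • ψ z) '' Ω)))⁻¹ •
              ((x + t₀ • ψ x) - τ),
            ψ x - ψ (g₀ τ)⟫))
      t₀ := by

  classical
  have hxcl : x ∈ closure Ω := subset_closure hx
  have hBsub : frontier Ω ⊆ closure Ω := frontier_subset_closure
  have hclcpt : IsCompact (closure Ω) := hΩb.isCompact_closure
  have hBcpt : IsCompact (frontier Ω) := hclcpt.of_isClosed_subset isClosed_frontier hBsub
  have hψc : ContinuousOn ψ (closure Ω) := hψ.continuousOn
  obtain ⟨M, hM⟩ := hclcpt.exists_bound_of_continuousOn hψc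
  set d₀ := Metric.infDist (x + t₀ • ψ x) (frontier ((fun z => z + t₀ • ψ z) '' Ω)) with hd₀def
  obtain ⟨b₀', hb₀'F, hb₀'e⟩ : ∃ b ∈ frontier Ω, b + t₀ • ψ b = τ := by
    rw [← hfr] at hτmem; exact hτmem
  have hgτ : g₀ τ = b₀' := by rw [← hb₀'e]; exact hg₀i (hBsub hb₀'F)
  have hφcont : ∀ t : ℝ, ContinuousOn (fun z => z + t • ψ z) (closure Ω) :=
    fun t => continuousOn_id.add (hψc.const_smul t)
  have himgcpt : ∀ t : ℝ, IsCompact ((fun z => z + t • ψ z) '' frontier Ω) :=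
    fun t => hBcpt.image_of_continuousOn ((hφcont t).mono hBsub)
  have himgne : ∀ t : ℝ, ((fun z => z + t • ψ z) '' frontier Ω).Nonempty :=
    fun t => ⟨_, ⟨b₀', hb₀'F, rfl⟩⟩
  -- d₀ is positive
  have hynot : (x + t₀ • ψ x) ∉ frontier ((fun z => z + t₀ • ψ z) '' Ω) := by
    rw [← hfr]
    rintro ⟨b, hbF, hbe⟩
    have hbx : b = x := hg₀i.injOn (hBsub hbF) hxcl hbe
    have hxF : x ∈ frontier Ω := hbx ▸ hbF
    rw [hΩo.frontier_eq] at hxF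
    exact hxF.2 hx
  have hd₀pos : 0 < d₀ := by
    rw [hd₀def]
    exact (isClosed_frontier.notMem_iff_infDist_pos ⟨τ, hτmem⟩).1 hynot
  have hd₀τ : d₀ = dist (x + t₀ • ψ x) τ := hτdist.symm
  have hdistφ : ∀ (t : ℝ) (b : EuclideanSpace ℝ (Fin n)),
      dist (x + t • ψ x) (b + t • ψ b) = ‖(x - b) + t • (ψ x - ψ b)‖ := by
    intro t b
    rw [dist_eq_norm, smul_sub]
    congr 1
    abel
  set D : ℝ → ℝ :=
    fun t => Metric.infDist (x + t • ψ x) ((fun z => z + t • ψ z) '' frontier Ω) with hDdef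
  set F : ℝ → ℝ := fun t => ‖(x - b₀') + t • (ψ x - ψ b₀')‖ with hFdef
  have hDle : ∀ t, D t ≤ F t := by
    intro t
    rw [hDdef, hFdef]
    simp only
    rw [← hdistφ]
    exact infDist_le_dist_of_mem ⟨b₀', hb₀'F, rfl⟩
  have hDt₀ : D t₀ = d₀ := by rw [hDdef, hd₀def]; simp only; rw [hfr]
  have hFt₀ : F t₀ = d₀ := by
    rw [hFdef]
    simp only
    rw [← hdistφ t₀ b₀', hb₀'e, hd₀τ]
  -- nearest points
  have hβex : ∀ t : ℝ, ∃ b, b ∈ frontier Ω ∧ D t = dist (x + t • ψ x) (b + t • ψ b) := by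
    intro t
    obtain ⟨z, hz, hzd⟩ := (himgcpt t).exists_infDist_eq_dist (himgne t) (x + t • ψ x)
    obtain ⟨b, hb, rfl⟩ := hz
    exact ⟨b, hb, by rw [hDdef]; exact hzd⟩
  choose β hβF hβd using hβex
  set γ : ℝ → EuclideanSpace ℝ (Fin n) := fun t => β t + t₀ • ψ (β t) with hγdef
  have hγfr : ∀ t, γ t ∈ frontier ((fun z => z + t₀ • ψ z) '' Ω) := by
    intro t; rw [← hfr]; exact ⟨β t, hβF t, rfl⟩
  have hγd : ∀ t, d₀ ≤ dist (x + t₀ • ψ x) (γ t) := by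
    intro t; rw [hd₀def]; exact infDist_le_dist_of_mem (hγfr t)
  -- lower (subgradient) estimate
  set m : ℝ → ℝ := fun t =>
    ⟪(x + t₀ • ψ x) - γ t, ψ x - ψ (β t)⟫ / dist (x + t₀ • ψ x) (γ t) with hmdef
  have hlow : ∀ t, dist (x + t₀ • ψ x) (γ t) + (t - t₀) * m t ≤ D t := by
    intro t
    set v := (x - β t) + t₀ • (ψ x - ψ (β t)) with hvdef
    set w := ψ x - ψ (β t) with hwdef
    have hveq : (x + t₀ • ψ x) - γ t = v := by
      rw [hγdef, hvdef]; simp only; rw [smul_sub]; abel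
    have hvnorm : dist (x + t₀ • ψ x) (γ t) = ‖v‖ := by rw [dist_eq_norm, hveq]
    have hvpos : 0 < ‖v‖ := lt_of_lt_of_le hd₀pos (by rw [← hvnorm]; exact hγd t)
    have hu : (x - β t) + t • (ψ x - ψ (β t)) = v + (t - t₀) • w := by
      rw [hvdef, hwdef]; rw [sub_smul]; abel
    have hDt : D t = ‖v + (t - t₀) • w‖ := by rw [hβd t, hdistφ, hu]
    have hinner : ⟪v, v + (t - t₀) • w⟫ = ‖v‖ * ‖v‖ + (t - t₀) * ⟪v, w⟫ := by
      rw [inner_add_right, real_inner_smul_right, real_inner_self_eq_norm_mul_norm]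
    have hCS : ⟪v, v + (t - t₀) • w⟫ ≤ ‖v‖ * ‖v + (t - t₀) • w‖ := real_inner_le_norm _ _
    have hm : m t = ⟪v, w⟫ / ‖v‖ := by
      rw [hmdef]; simp only; rw [hveq, hvnorm]
    rw [hDt, hvnorm, hm]
    have h2 : ‖v‖ * (‖v‖ + (t - t₀) * (⟪v, w⟫ / ‖v‖)) ≤ ‖v‖ * ‖v + (t - t₀) • w‖ := by
      have hexp : ‖v‖ * (‖v‖ + (t - t₀) * (⟪v, w⟫ / ‖v‖)) = ‖v‖ * ‖v‖ + (t - t₀) * ⟪v, w⟫ := by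
        field_simp
      rw [hexp, ← hinner]
      exact hCS
    exact le_of_mul_le_mul_left h2 hvpos
  -- derivative of the upper function F
  set L : ℝ := ⟪(x + t₀ • ψ x) - τ, ψ x - ψ b₀'⟫ / d₀ with hLdef
  have hgder : HasDerivAt (fun t : ℝ => (x - b₀') + t • (ψ x - ψ b₀')) (ψ x - ψ b₀') t₀ := by
    have h := (hasDerivAt_id t₀).smul_const (ψ x - ψ b₀')
    simpa using h.const_add (x - b₀')
  have hv₀ : (x - b₀') + t₀ • (ψ x - ψ b₀') = (x + t₀ • ψ x) - τ := by
    rw [← hb₀'e, smul_sub]; abel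
  have hFder : HasDerivAt F L t₀ := by
    have hinner2 := hgder.inner (𝕜 := ℝ) hgder
    rw [hv₀] at hinner2
    have hval : ⟪(x - b₀') + t₀ • (ψ x - ψ b₀'), (x - b₀') + t₀ • (ψ x - ψ b₀')⟫ = d₀ * d₀ := by
      rw [hv₀, real_inner_self_eq_norm_mul_norm, ← dist_eq_norm, ← hd₀τ]
    have hne : (fun t : ℝ => ⟪(x - b₀') + t • (ψ x - ψ b₀'), (x - b₀') + t • (ψ x - ψ b₀')⟫) t₀ ≠ 0 := by
      simp only
      rw [hval]
      positivity
    have hsq := hinner2.sqrt hne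
    have hFeq : (fun t : ℝ => Real.sqrt
        ⟪(x - b₀') + t • (ψ x - ψ b₀'), (x - b₀') + t • (ψ x - ψ b₀')⟫) = F := by
      funext t
      rw [hFdef]
      simp only
      rw [real_inner_self_eq_norm_mul_norm, Real.sqrt_mul_self (norm_nonneg _)]
    rw [hFeq] at hsq
    convert hsq using 1
    rw [hval, Real.sqrt_mul_self hd₀pos.le, hLdef, real_inner_comm (ψ x - ψ b₀')]
    field_simp
    ring
  have hFslope : Tendsto (slope F t₀) (𝓝[≠] t₀) (𝓝 L) := hasDerivAt_iff_tendsto_slope.1 hFder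
  have hFcont : ContinuousAt F t₀ := hFder.continuousAt
  have hM0 : (0:ℝ) ≤ M := le_trans (norm_nonneg _) (hM x hxcl)
  -- the moving nearest point converges to τ
  have hγy : ∀ t, dist (x + t₀ • ψ x) (γ t) ≤ D t + |t - t₀| * (‖ψ x‖ + M) := by
    intro t
    have h1 : dist (x + t₀ • ψ x) (x + t • ψ x) = |t - t₀| * ‖ψ x‖ := by
      rw [dist_eq_norm]
      have : (x + t₀ • ψ x) - (x + t • ψ x) = (t₀ - t) • ψ x := by rw [sub_smul]; abel
      rw [this, norm_smul, Real.norm_eq_abs, abs_sub_comm]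
    have h2 : dist (β t + t • ψ (β t)) (γ t) = |t - t₀| * ‖ψ (β t)‖ := by
      rw [hγdef]
      simp only
      rw [dist_eq_norm]
      have : (β t + t • ψ (β t)) - (β t + t₀ • ψ (β t)) = (t - t₀) • ψ (β t) := by
        rw [sub_smul]; abel
      rw [this, norm_smul, Real.norm_eq_abs]
    calc dist (x + t₀ • ψ x) (γ t)
        ≤ dist (x + t₀ • ψ x) (x + t • ψ x) + dist (x + t • ψ x) (β t + t • ψ (β t))
          + dist (β t + t • ψ (β t)) (γ t) := dist_triangle4 _ _ _ _
      _ ≤ |t - t₀| * ‖ψ x‖ + D t + |t - t₀| * M := by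
          rw [h1, h2, ← hβd t]
          have := hM (β t) (hBsub (hβF t))
          have habs : (0:ℝ) ≤ |t - t₀| := abs_nonneg _
          nlinarith
      _ = D t + |t - t₀| * (‖ψ x‖ + M) := by ring
  have hγtend : Tendsto γ (𝓝 t₀) (𝓝 τ) := by
    rw [Metric.tendsto_nhds]
    intro ε hε
    rcases eq_empty_or_nonempty
        (((fun z => z + t₀ • ψ z) '' frontier Ω) \ ball τ ε) with hemp | ⟨z₁, hz₁⟩
    · filter_upwards with t
      by_contra h
      have hmem : γ t ∈ ((fun z => z + t₀ • ψ z) '' frontier Ω) \ ball τ ε :=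
        ⟨⟨β t, hβF t, rfl⟩, fun hb => h (mem_ball.1 hb)⟩
      rw [hemp] at hmem
      exact hmem
    · have hcpt' : IsCompact (((fun z => z + t₀ • ψ z) '' frontier Ω) \ ball τ ε) :=
        (himgcpt t₀).diff isOpen_ball
      obtain ⟨z₂, hz₂mem, hz₂d⟩ := hcpt'.exists_infDist_eq_dist ⟨z₁, hz₁⟩ (x + t₀ • ψ x)
      have hz₂fr : z₂ ∈ frontier ((fun z => z + t₀ • ψ z) '' Ω) := hfr ▸ hz₂mem.1
      have hρ : d₀ < dist (x + t₀ • ψ x) z₂ := by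
        have h1 : d₀ ≤ dist (x + t₀ • ψ x) z₂ := by
          rw [hd₀def]; exact infDist_le_dist_of_mem hz₂fr
        rcases h1.lt_or_eq with h | h
        · exact h
        · exfalso
          have huniq := hτuniq z₂ hz₂fr h.symm
          exact hz₂mem.2 (huniq ▸ mem_ball_self hε)
      have htd : Tendsto (fun t => F t + |t - t₀| * (‖ψ x‖ + M)) (𝓝 t₀) (𝓝 d₀) := by
        have h1 : Tendsto (fun t : ℝ => |t - t₀|) (𝓝 t₀) (𝓝 0) := by
          have h0 : Tendsto (fun t : ℝ => t - t₀) (𝓝 t₀) (𝓝 (t₀ - t₀)) :=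
            tendsto_id.sub tendsto_const_nhds
          rw [sub_self] at h0
          simpa using h0.abs
        have h2 := (hFcont.tendsto.add (h1.mul_const (‖ψ x‖ + M)))
        simpa [hFt₀] using h2
      have hev2 : ∀ᶠ t in 𝓝 t₀, F t + |t - t₀| * (‖ψ x‖ + M) < dist (x + t₀ • ψ x) z₂ :=
        htd.eventually_lt_const hρ
      filter_upwards [hev2] with t ht
      by_contra h
      have hγmem : γ t ∈ ((fun z => z + t₀ • ψ z) '' frontier Ω) \ ball τ ε :=
        ⟨⟨β t, hβF t, rfl⟩, fun hb => h (mem_ball.1 hb)⟩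
      have hub : dist (x + t₀ • ψ x) z₂ ≤ dist (x + t₀ • ψ x) (γ t) := by
        rw [← hz₂d]; exact infDist_le_dist_of_mem hγmem
      have h3 := hγy t
      have h4 := hDle t
      linarith
  -- β converges to b₀'
  have hγS : ∀ t, γ t ∈ (fun z => z + t₀ • ψ z) '' closure Ω :=
    fun t => ⟨β t, hBsub (hβF t), rfl⟩
  have hτS : τ ∈ (fun z => z + t₀ • ψ z) '' closure Ω := ⟨b₀', hBsub hb₀'F, hb₀'e⟩
  have hβeq : ∀ t, g₀ (γ t) = β t := fun t => hg₀i (hBsub (hβF t))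
  have hβtend : Tendsto β (𝓝 t₀) (𝓝 b₀') := by
    have hg₀c : ContinuousWithinAt g₀ ((fun z => z + t₀ • ψ z) '' closure Ω) τ :=
      hg₀.continuousOn τ hτS
    have h1 : Tendsto γ (𝓝 t₀) (𝓝[(fun z => z + t₀ • ψ z) '' closure Ω] τ) :=
      tendsto_nhdsWithin_iff.2 ⟨hγtend, Eventually.of_forall hγS⟩
    have h2 := hg₀c.tendsto.comp h1
    rw [hgτ] at h2
    exact Filter.Tendsto.congr hβeq h2
  have hψβ : Tendsto (fun t => ψ (β t)) (𝓝 t₀) (𝓝 (ψ b₀')) := by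
    have hψc' : ContinuousWithinAt ψ (closure Ω) b₀' := hψc b₀' (hBsub hb₀'F)
    exact hψc'.tendsto.comp
      (tendsto_nhdsWithin_iff.2 ⟨hβtend, Eventually.of_forall fun t => hBsub (hβF t)⟩)
  have hmtend : Tendsto m (𝓝 t₀) (𝓝 L) := by
    rw [hLdef, hmdef]
    have hnum : Tendsto (fun t => ⟪(x + t₀ • ψ x) - γ t, ψ x - ψ (β t)⟫) (𝓝 t₀)
        (𝓝 ⟪(x + t₀ • ψ x) - τ, ψ x - ψ b₀'⟫) :=
      (tendsto_const_nhds.sub hγtend).inner (tendsto_const_nhds.sub hψβ)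
    have hden : Tendsto (fun t => dist (x + t₀ • ψ x) (γ t)) (𝓝 t₀) (𝓝 d₀) := by
      rw [hd₀τ]; exact tendsto_const_nhds.dist hγtend
    exact hnum.div hden (ne_of_gt hd₀pos)
  -- squeeze for the slope of D
  have hDslope : Tendsto (slope D t₀) (𝓝[≠] t₀) (𝓝 L) := by
    have hmin : Tendsto (fun t => min (m t) (slope F t₀ t)) (𝓝[≠] t₀) (𝓝 L) := by
      have := (hmtend.mono_left nhdsWithin_le_nhds).min hFslope
      rwa [min_self] at this
    have hmax : Tendsto (fun t => max (m t) (slope F t₀ t)) (𝓝[≠] t₀) (𝓝 L) := by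
      have := (hmtend.mono_left nhdsWithin_le_nhds).max hFslope
      rwa [max_self] at this
    have hkey1 : ∀ t, (t - t₀) * m t ≤ D t - D t₀ := by
      intro t
      have h1 := hlow t
      have h2 := hγd t
      rw [hDt₀]
      linarith
    have hkey2 : ∀ t, D t - D t₀ ≤ F t - F t₀ := by
      intro t
      have := hDle t
      rw [hDt₀, hFt₀]
      linarith
    refine tendsto_of_tendsto_of_tendsto_of_le_of_le' hmin hmax ?_ ?_
    · refine eventually_nhdsWithin_of_forall fun t ht => ?_
      have hne : t ≠ t₀ := ht
      rcases lt_or_gt_of_ne hne with hlt | hgt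
      · refine le_trans (min_le_right _ _) ?_
        rw [slope_def_field, slope_def_field]
        exact (div_le_div_right_of_neg (by linarith : t - t₀ < 0)).2 (hkey2 t)
      · refine le_trans (min_le_left _ _) ?_
        rw [slope_def_field]
        rw [le_div_iff₀ (by linarith : (0:ℝ) < t - t₀)]
        have := hkey1 t
        linarith [hkey1 t]
    · refine eventually_nhdsWithin_of_forall fun t ht => ?_
      have hne : t ≠ t₀ := ht
      rcases lt_or_gt_of_ne hne with hlt | hgt
      · refine le_trans ?_ (le_max_left _ _)
        rw [slope_def_field]
        rw [div_le_iff_of_neg (by linarith : t - t₀ < 0)]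
        have := hkey1 t
        linarith
      · refine le_trans ?_ (le_max_right _ _)
        rw [slope_def_field, slope_def_field]
        exact (div_le_div_iff_of_pos_right (by linarith : (0:ℝ) < t - t₀)).2 (hkey2 t)
  have hDder : HasDerivAt D L t₀ := hasDerivAt_iff_tendsto_slope.2 hDslope
  -- Lipschitz extension of ψ ∘ g₀ and local identification of the moving boundary
  have hmaps : MapsTo g₀ ((fun z => z + t₀ • ψ z) '' closure Ω) (closure Ω) := by
    rintro w ⟨z, hz, rfl⟩
    rw [hg₀i hz]
    exact hz
  have hcomp : LipschitzOnWith (K * K₀) (ψ ∘ g₀) ((fun z => z + t₀ • ψ z) '' closure Ω) :=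
    hψ.comp hg₀ hmaps
  set e := EuclideanSpace.equiv (Fin n) ℝ with hedef
  have hecomp : LipschitzOnWith (‖(e : EuclideanSpace ℝ (Fin n) →L[ℝ] (Fin n → ℝ))‖₊ * (K * K₀))
      (⇑e ∘ (ψ ∘ g₀)) ((fun z => z + t₀ • ψ z) '' closure Ω) :=
    e.lipschitz.comp_lipschitzOnWith hcomp
  obtain ⟨Θ, hΘlip, hΘeq⟩ := hecomp.extend_pi
  set Kθ : NNReal := ‖(e.symm : (Fin n → ℝ) →L[ℝ] EuclideanSpace ℝ (Fin n))‖₊ *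
    (‖(e : EuclideanSpace ℝ (Fin n) →L[ℝ] (Fin n → ℝ))‖₊ * (K * K₀)) with hKθdef
  set θ : EuclideanSpace ℝ (Fin n) → EuclideanSpace ℝ (Fin n) := fun z => e.symm (Θ z) with hθdef
  have hθlip : LipschitzWith Kθ θ := e.symm.lipschitz.comp hΘlip
  have hθeq : ∀ w ∈ (fun z => z + t₀ • ψ z) '' closure Ω, θ w = ψ (g₀ w) := by
    intro w hw
    rw [hθdef]
    simp only
    rw [← hΘeq hw]
    simp [hedef]
  obtain ⟨δ, hδpos, hδ⟩ : ∃ δ : ℝ, 0 < δ ∧ ∀ s : ℝ, |s| ≤ δ → |s| * (Kθ:ℝ) < 1 := by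
    refine ⟨1 / ((Kθ:ℝ) + 1), by positivity, fun s hs => ?_⟩
    have hc : (0:ℝ) ≤ Kθ := Kθ.2
    have habs : (0:ℝ) ≤ |s| := abs_nonneg s
    have h1 : |s| * (Kθ:ℝ) ≤ (1 / ((Kθ:ℝ) + 1)) * Kθ := mul_le_mul_of_nonneg_right hs hc
    have h2 : (1 / ((Kθ:ℝ) + 1)) * Kθ < 1 := by
      rw [div_mul_eq_mul_div, div_lt_one (by positivity)]
      linarith
    linarith
  have hkeyfr : ∀ t : ℝ, |t - t₀| ≤ δ →
      frontier ((fun z => z + t • ψ z) '' Ω) = (fun z => z + t • ψ z) '' frontier Ω := by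
    intro t ht
    have hfr' := perturb_frontier_image θ Kθ hθlip (t - t₀) (hδ _ ht)
    have hcompφ : ∀ z ∈ closure Ω,
        (fun w => w + (t - t₀) • θ w) (z + t₀ • ψ z) = z + t • ψ z := by
      intro z hz
      simp only
      have hθv : θ (z + t₀ • ψ z) = ψ z := by
        rw [hθeq _ ⟨z, hz, rfl⟩, hg₀i hz]
      rw [hθv, add_assoc, ← add_smul]
      have h2 : t₀ + (t - t₀) = t := by ring
      rw [h2]
    have himgS : ∀ S, S ⊆ closure Ω → (fun z => z + t • ψ z) '' S =
        (fun w => w + (t - t₀) • θ w) '' ((fun z => z + t₀ • ψ z) '' S) := by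
      intro S hS
      rw [Set.image_image]
      exact Set.image_congr fun z hz => (hcompφ z (hS hz)).symm
    calc frontier ((fun z => z + t • ψ z) '' Ω)
        = frontier ((fun w => w + (t - t₀) • θ w) '' ((fun z => z + t₀ • ψ z) '' Ω)) := by
          rw [← himgS Ω subset_closure]
      _ = (fun w => w + (t - t₀) • θ w) '' frontier ((fun z => z + t₀ • ψ z) '' Ω) :=
          (hfr' _).symm
      _ = (fun w => w + (t - t₀) • θ w) '' ((fun z => z + t₀ • ψ z) '' frontier Ω) := by
          rw [hfr]
      _ = (fun z => z + t • ψ z) '' frontier Ω := (himgS _ hBsub).symm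
  have hev : (fun t : ℝ =>
      Metric.infDist (x + t • ψ x) (frontier ((fun z => z + t • ψ z) '' Ω))) =ᶠ[𝓝 t₀] D := by
    have hball : ∀ᶠ t : ℝ in 𝓝 t₀, |t - t₀| ≤ δ := by
      filter_upwards [Metric.closedBall_mem_nhds t₀ hδpos] with t ht
      rwa [mem_closedBall, Real.dist_eq] at ht
    filter_upwards [hball] with t ht
    rw [hkeyfr t ht, hDdef]
  have hdder : HasDerivAt (fun t : ℝ =>
      Metric.infDist (x + t • ψ x) (frontier ((fun z => z + t • ψ z) '' Ω))) L t₀ :=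
    hDder.congr_of_eventuallyEq hev
  have hfinal := (Real.hasDerivAt_rpow_const (x := d₀) (p := p) (Or.inr hp)).comp t₀ hdder
  have heq : p * d₀ ^ p * (d₀⁻¹ * ⟪d₀⁻¹ • ((x + t₀ • ψ x) - τ), ψ x - ψ (g₀ τ)⟫) =
      p * d₀ ^ (p - 1) * L := by
    rw [hLdef, hgτ, real_inner_smul_left]
    rw [Real.rpow_sub hd₀pos, Real.rpow_one]
    field_simp
  rw [heq]
  exact hfinal
end
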